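/- Let H be a complex Hilbert space, 𝒱 and 𝒲 closed subspaces with H = 𝒱 ⊕ 𝒲ᗮ, and P = π_{𝒱,𝒲ᗮ}. Let (W,w) be a fusion Bessel sequence with every W_i ⊆ 𝒲 and synthesis operator T_W, let (V,v) be a fusion Bessel sequence with every V_i ⊆ 𝒱 and synthesis operator T_V, and let Q : K_W → K_V be a bounded operator. If ‖T_V Q T_W* − P‖ ≤ ε for some ε < 1, then the range of T_W equals 𝒲 and the range of T_V equals 𝒱; i.e., (W,w) is a fusion frame for 𝒲 and (V,v) is a fusion frame for 𝒱. -/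

import Mathlib

open scoped ENNReal ComplexInnerProductSpace
set_option synthInstance.maxHeartbeats 1000000
set_option maxHeartbeats 1000000
noncomputable section

open ContinuousLinearMap in
/-- If `D` is a bounded operator mapping into a complete subspace `𝒰`, `R` fixes `𝒰`
pointwise, and `‖D - R‖ ≤ ε < 1`, then every element of `𝒰` is in the range of `D`. -/
lemma key_surj_aux {H : Type*} [NormedAddCommGroup H] [InnerProductSpace ℂ H] [CompleteSpace H]
    (𝒰 : Submodule ℂ H) [CompleteSpace 𝒰] (D R : H →L[ℂ] H)
    (hDmem : ∀ x, D x ∈ 𝒰) (hR : ∀ x ∈ 𝒰, R x = x) (ε : ℝ) (hε : ε < 1)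
    (h : ‖D - R‖ ≤ ε) : ∀ y ∈ 𝒰, ∃ x, D x = y := by
  intro y hy
  set S : 𝒰 →L[ℂ] 𝒰 := ContinuousLinearMap.codRestrict (D.comp 𝒰.subtypeL) 𝒰
    (fun x => hDmem x) with hS
  have hε0 : 0 ≤ ε := le_trans (norm_nonneg _) h
  have hnorm : ‖(1 : 𝒰 →L[ℂ] 𝒰) - S‖ ≤ ε := by
    apply ContinuousLinearMap.opNorm_le_bound _ hε0
    intro x
    have h1 : ‖((1 : 𝒰 →L[ℂ] 𝒰) - S) x‖ = ‖(R - D) (x : H)‖ := by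
      simp only [ContinuousLinearMap.sub_apply, ContinuousLinearMap.one_apply]
      have hc : ((x - S x : 𝒰) : H) = R (x : H) - D (x : H) := by
        push_cast
        simp [hS, hR x x.2]; rfl
      rw [← Submodule.norm_coe, hc]
    rw [h1]
    calc ‖(R - D) (x : H)‖ ≤ ‖R - D‖ * ‖(x : H)‖ := (R - D).le_opNorm _
      _ ≤ ε * ‖x‖ := by
        rw [norm_sub_rev] at h
        exact mul_le_mul_of_nonneg_right h (norm_nonneg _)
  have hu : ‖(1 : 𝒰 →L[ℂ] 𝒰) - S‖ < 1 := lt_of_le_of_lt hnorm hε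
  let u := Units.oneSub ((1 : 𝒰 →L[ℂ] 𝒰) - S) hu
  have huval : (u : 𝒰 →L[ℂ] 𝒰) = S := by
    simp [u, Units.val_oneSub, sub_sub_cancel]
  set z : 𝒰 := (↑u⁻¹ : 𝒰 →L[ℂ] 𝒰) ⟨y, hy⟩ with hz
  refine ⟨(z : H), ?_⟩
  have : S z = ⟨y, hy⟩ := by
    rw [← huval]
    calc (u : 𝒰 →L[ℂ] 𝒰) z = ((u * u⁻¹ : Units (𝒰 →L[ℂ] 𝒰)) : 𝒰 →L[ℂ] 𝒰) ⟨y, hy⟩ := by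
          rw [Units.val_mul]; rfl
      _ = ⟨y, hy⟩ := by rw [mul_inv_cancel]; rfl
  have := congrArg (Subtype.val) this
  exact this

/-- If `(W,w)` and `(V,v)` are fusion Bessel sequences (with subspaces inside `𝒲` and `𝒱`
respectively) and `‖T_V Q T_W* − P‖ ≤ ε < 1` for the oblique projection `P = π_{𝒱,𝒲ᗮ}`,
then `T_W` has range `𝒲` and `T_V` has range `𝒱`; i.e. `(W,w)` is a fusion frame for `𝒲`
and `(V,v)` is a fusion frame for `𝒱`. -/
theorem fusionBessel_isFusionFrame_of_approx_dual
    {H : Type*} [NormedAddCommGroup H] [InnerProductSpace ℂ H] [CompleteSpace H]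
    {I : Type*} [Countable I]
    (𝒱 𝒲 : Submodule ℂ H) [CompleteSpace 𝒱] [CompleteSpace 𝒲]
    (P : H →L[ℂ] H) (hPidem : P ∘L P = P)
    (hPran : LinearMap.range (P : H →ₗ[ℂ] H) = 𝒱) (hPker : LinearMap.ker (P : H →ₗ[ℂ] H) = 𝒲ᗮ)
    (W : I → Submodule ℂ H) [∀ i, CompleteSpace (W i)] (hW : ∀ i, W i ≤ 𝒲)
    (w : I → ℝ) (hw : ∀ i, 0 < w i)
    (TW : lp (fun i => W i) 2 →L[ℂ] H)
    (hTW : ∀ g : lp (fun i => W i) 2, HasSum (fun i => (w i : ℂ) • (g i : H)) (TW g))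
    (V : I → Submodule ℂ H) [∀ i, CompleteSpace (V i)] (hV : ∀ i, V i ≤ 𝒱)
    (v : I → ℝ) (hv : ∀ i, 0 < v i)
    (TV : lp (fun i => V i) 2 →L[ℂ] H)
    (hTV : ∀ g : lp (fun i => V i) 2, HasSum (fun i => (v i : ℂ) • (g i : H)) (TV g))
    (Q : lp (fun i => W i) 2 →L[ℂ] lp (fun i => V i) 2)
    (ε : ℝ) (hε : ε < 1)
    (hdual : ‖TV ∘L Q ∘L ContinuousLinearMap.adjoint TW - P‖ ≤ ε) :
    LinearMap.range (TW : lp (fun i => W i) 2 →ₗ[ℂ] H) = 𝒲 ∧ LinearMap.range (TV : lp (fun i => V i) 2 →ₗ[ℂ] H) = 𝒱 := by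
  classical
  have h𝒲closed : IsClosed (𝒲 : Set H) :=
    (completeSpace_coe_iff_isComplete.mp ‹_›).isClosed
  have h𝒱closed : IsClosed (𝒱 : Set H) :=
    (completeSpace_coe_iff_isComplete.mp ‹_›).isClosed
  -- ranges are contained in the subspaces
  have hranW : ∀ g, TW g ∈ 𝒲 := fun g => by
    refine h𝒲closed.mem_of_tendsto (hTW g) (Filter.Eventually.of_forall fun s => ?_)
    exact Submodule.sum_mem _ fun i _ => Submodule.smul_mem _ _ (hW i (g i).2)
  have hranV : ∀ g, TV g ∈ 𝒱 := fun g => by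
    refine h𝒱closed.mem_of_tendsto (hTV g) (Filter.Eventually.of_forall fun s => ?_)
    exact Submodule.sum_mem _ fun i _ => Submodule.smul_mem _ _ (hV i (g i).2)
  set D : H →L[ℂ] H := TV ∘L Q ∘L ContinuousLinearMap.adjoint TW with hD
  set E : H →L[ℂ] H :=
    TW ∘L (ContinuousLinearMap.adjoint Q ∘L ContinuousLinearMap.adjoint TV) with hE
  have hEadj : ContinuousLinearMap.adjoint D = E := by
    ext x
    simp [hD, hE, ContinuousLinearMap.adjoint_comp, ContinuousLinearMap.adjoint_adjoint]
  set P' : H →L[ℂ] H := ContinuousLinearMap.adjoint P with hP'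
  have hnormE : ‖E - P'‖ ≤ ε := by
    have h1 : E - P' = ContinuousLinearMap.adjoint (D - P) := by
      rw [map_sub, hEadj]
    rw [h1, LinearIsometryEquiv.norm_map]
    exact hdual
  -- P fixes 𝒱
  have hPfix : ∀ x ∈ 𝒱, P x = x := by
    intro x hx
    rw [← hPran] at hx
    obtain ⟨z, rfl⟩ := hx
    have := DFunLike.congr_fun hPidem z
    simpa using this
  -- P' fixes 𝒲
  have hP'fix : ∀ x ∈ 𝒲, P' x = x := by
    intro x hx
    have hker : ∀ y, P y - y ∈ 𝒲ᗮ := by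
      intro y
      rw [← hPker, LinearMap.mem_ker]
      have := DFunLike.congr_fun hPidem y
      simp only [ContinuousLinearMap.coe_comp', Function.comp_apply] at this
      simp [map_sub, this]
    have hinner : ∀ y, (inner ℂ x (P y - y) : ℂ) = 0 := fun y =>
      (Submodule.mem_orthogonal 𝒲 _).mp (hker y) x hx
    refine ext_inner_right ℂ fun y => ?_
    rw [hP', ContinuousLinearMap.adjoint_inner_left]
    have := hinner y
    rw [inner_sub_right, sub_eq_zero] at this
    exact this
  constructor
  · -- range TW = 𝒲
    refine le_antisymm ?_ ?_
    · rintro x ⟨g, rfl⟩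
      exact hranW g
    · intro y hy
      have hEmem : ∀ x, E x ∈ 𝒲 := fun x => hranW _
      obtain ⟨x, hx⟩ := key_surj_aux 𝒲 E P' hEmem hP'fix ε hε hnormE y hy
      exact ⟨(ContinuousLinearMap.adjoint Q) ((ContinuousLinearMap.adjoint TV) x), hx⟩
  · -- range TV = 𝒱
    refine le_antisymm ?_ ?_
    · rintro x ⟨g, rfl⟩
      exact hranV g
    · intro y hy
      have hDmem : ∀ x, D x ∈ 𝒱 := fun x => hranV _
      obtain ⟨x, hx⟩ := key_surj_aux 𝒱 D P hDmem hPfix ε hε hdual y hy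
      exact ⟨Q ((ContinuousLinearMap.adjoint TW) x), hx⟩
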